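/- arXiv:1503.00885 — 2 statements merged into one kernel-verified Lean document; each statement's English description precedes it below -/
import Mathlib

section
/- Let n = k(k+1)/2 and τ = (k-1, k-1, k-2, ..., 2, 1, 1). Then for each i with 0 ≤ i ≤ k(k-1) - 1, the partition B^{k(k-1)-i-1}(τ) is the conjugate (transpose) of the partition B^i(τ). -/
/-- A partition of `n`: a multiset of positive integers summing to `n`
(multisets model nonincreasing sequences, since order is irrelevant). -/
def IsPartition (n : ℕ) (l : Multiset ℕ) : Prop :=
  l.sum = n ∧ ∀ x ∈ l, 0 < x

/-- The Bulgarian solitaire move: remove one card from each pile, discard empty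
piles, and add a new pile whose size is the number of old piles. -/
def bulg (l : Multiset ℕ) : Multiset ℕ :=
  (Multiset.card l ::ₘ l.map (· - 1)).filter (0 < ·)

/-- The staircase partition `(k, k-1, …, 2, 1)`. -/
def staircase (k : ℕ) : Multiset ℕ := (Multiset.range k).map (· + 1)

/-- Toom's partition τ = (k-1, k-1, k-2, …, 2, 1, 1) of n = k(k+1)/2. -/
def tau (k : ℕ) : Multiset ℕ := (k - 1) ::ₘ 1 ::ₘ staircase (k - 1)

/-- The conjugate (transpose) partition: its j-th part is the number of parts
that are ≥ j. -/
def conj (l : Multiset ℕ) : Multiset ℕ :=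
  (Multiset.range l.sup).map fun j => Multiset.card (l.filter (j < ·))

def g (a b j : ℕ) : ℕ := j + (if j = b then 1 else 0) - (if j = a then 1 else 0)

def Y (k a b : ℕ) : Multiset ℕ := ((Multiset.range (k+1)).map (g a b)).filter (0 < ·)

lemma mapRangeSucc (F : ℕ → ℕ) (n : ℕ) :
    (Multiset.range (n+1)).map F = F 0 ::ₘ (Multiset.range n).map (fun j => F (j+1)) := by
  induction n with
  | zero => simp [Multiset.range_succ]
  | succ n ih =>
    rw [Multiset.range_succ, Multiset.map_cons, ih, Multiset.range_succ, Multiset.map_cons,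
      Multiset.cons_swap]

lemma filterMapSub (s : Multiset ℕ) :
    ((s.filter (0 < ·)).map (· - 1)).filter (0 < ·) = (s.map (· - 1)).filter (0 < ·) := by
  induction s using Multiset.induction with
  | empty => simp
  | cons a s ih =>
    rcases Nat.eq_zero_or_pos a with h | h
    · subst h
      simp [Multiset.filter_cons, ih]
    · simp only [Multiset.filter_cons, h, if_pos, Multiset.map_cons]
      rcases Nat.lt_or_ge 1 a with h2 | h2
      · have : 0 < a - 1 := by omega
        simp [Multiset.filter_cons, this, ih]
      · have ha : a = 1 := by omega
        subst ha
        simp [Multiset.filter_cons, ih]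

lemma gPos (a b j : ℕ) (h : 2 ≤ j) : 0 < g a b j := by
  unfold g; split_ifs <;> omega

lemma Ydecomp (m a b : ℕ) :
    Y (m+2) a b = (if 0 < g a b 0 then {g a b 0} else 0) +
      ((if 0 < g a b 1 then {g a b 1} else 0)
      + (Multiset.range (m+1)).map (fun j => g a b (j+2))) := by
  rw [Y, show m+2+1 = (m+1)+1+1 from rfl, mapRangeSucc, mapRangeSucc]
  simp only [Multiset.filter_cons]
  congr 1
  congr 1
  rw [Multiset.filter_eq_self]
  intro x hx
  obtain ⟨j, _, rfl⟩ := Multiset.mem_map.mp hx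
  exact gPos a b (j+2) (by omega)

lemma cardY (m a b : ℕ) (ha1 : 1 ≤ a) (hak : a ≤ m+2) (hbk : b ≤ m+2) (hab : a ≠ b) :
    Multiset.card (Y (m+2) a b) =
      g (if a = 1 then m+2 else a-1) (if b = 0 then m+2 else b-1) (m+2) := by
  have c0 : Multiset.card (if 0 < g a b 0 then ({g a b 0} : Multiset ℕ) else 0)
      = if b = 0 then 1 else 0 := by
    have hg : g a b 0 = if b = 0 then 1 else 0 := by unfold g; split_ifs <;> omega
    rw [hg]; split_ifs <;> simp_all
  have c1 : Multiset.card (if 0 < g a b 1 then ({g a b 1} : Multiset ℕ) else 0)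
      = if a = 1 then 0 else 1 := by
    have hg : g a b 1 = if a = 1 then 0 else (if b = 1 then 2 else 1) := by
      unfold g; split_ifs <;> omega
    rw [hg]; split_ifs <;> simp_all
  rw [Ydecomp]
  simp only [Multiset.card_add, c0, c1, Multiset.card_map, Multiset.card_range]
  unfold g
  split_ifs <;> omega

lemma stepY (m a b : ℕ) (ha1 : 1 ≤ a) (hak : a ≤ m+2) (hbk : b ≤ m+2) (hab : a ≠ b) :
    bulg (Y (m+2) a b) =
      Y (m+2) (if a = 1 then m+2 else a-1) (if b = 0 then m+2 else b-1) := by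
  set a' := if a = 1 then m+2 else a-1 with ha'
  set b' := if b = 0 then m+2 else b-1 with hb'
  have hgk : 0 < g a' b' (m+2) := gPos _ _ _ (by omega)
  have hrhs : Y (m+2) a' b' =
      g a' b' (m+2) ::ₘ ((Multiset.range (m+2)).map (g a' b')).filter (0 < ·) := by
    rw [Y, Multiset.range_succ, Multiset.map_cons, Multiset.filter_cons, if_pos hgk,
      Multiset.singleton_add]
  have hcard := cardY m a b ha1 hak hbk hab
  have hmap : ((Y (m+2) a b).map (· - 1)).filter (0 < ·) =
      ((Multiset.range (m+2)).map (g a' b')).filter (0 < ·) := by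
    rw [Y, filterMapSub, Multiset.map_map]
    have : (Multiset.range (m+2+1)).map ((· - 1) ∘ g a b) =
        (g a b 0 - 1) ::ₘ (Multiset.range (m+2)).map (fun j => g a b (j+1) - 1) :=
      mapRangeSucc _ _
    rw [this, Multiset.filter_cons]
    have h0 : ¬ (0 < g a b 0 - 1) := by unfold g; split_ifs <;> omega
    rw [if_neg h0, zero_add]
    congr 1
    apply Multiset.map_congr rfl
    intro j hj
    rw [Multiset.mem_range] at hj
    unfold g
    rw [ha', hb']
    split_ifs <;> omega
  rw [bulg, Multiset.filter_cons, hcard, if_pos hgk, hmap, hrhs, Multiset.singleton_add]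

lemma revRange (m : ℕ) : (Multiset.range m).map (fun t => m - 1 - t) = Multiset.range m := by
  rw [(Multiset.nodup_range m).map_on ?inj |>.ext (Multiset.nodup_range m)]
  · intro a
    simp only [Multiset.mem_map, Multiset.mem_range]
    constructor
    · rintro ⟨t, ht, rfl⟩; omega
    · intro ha; exact ⟨m - 1 - a, by omega, by omega⟩
  · intro x hx y hy h
    simp only [Multiset.mem_range] at hx hy
    omega


lemma supY (m a b : ℕ) (ha1 : 1 ≤ a) (hak : a ≤ m+2) (hbk : b ≤ m+2) (hab : a ≠ b)
    (hab1 : a ≠ b+1) :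
    (Y (m+2) a b).sup = g a b (m+2) := by
  apply le_antisymm
  · rw [Multiset.sup_le]
    intro x hx
    rw [Y, Multiset.mem_filter, Multiset.mem_map] at hx
    obtain ⟨⟨j, hj, rfl⟩, -⟩ := hx
    rw [Multiset.mem_range] at hj
    unfold g; split_ifs <;> omega
  · apply Multiset.le_sup
    rw [Y, Multiset.mem_filter]
    exact ⟨Multiset.mem_map.mpr ⟨m+2, Multiset.mem_range.mpr (by omega), rfl⟩,
      gPos _ _ _ (by omega)⟩

lemma cardFilterLt (t n : ℕ) :
    Multiset.card ((Multiset.range n).filter (t < ·)) = n - 1 - t := by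
  induction n with
  | zero => simp
  | succ n ih =>
    rw [Multiset.range_succ, Multiset.filter_cons]
    rcases Nat.lt_or_ge t n with h | h
    · rw [if_pos h]; simp [ih]; omega
    · rw [if_neg (by omega)]; simp [ih]; omega

lemma countY (m a b t : ℕ) (ha1 : 1 ≤ a) (hak : a ≤ m+2) (hbk : b ≤ m+2)
    (hab : a ≠ b) (hab1 : a ≠ b+1) (ht : t ≤ m+2) :
    Multiset.card ((Y (m+2) a b).filter (t < ·)) = g (m+3-a) (m+2-b) (m+2-t) := by
  have hY : (Y (m+2) a b).filter (t < ·) =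
      ((Multiset.range (m+2+1)).map (g a b)).filter (t < ·) := by
    rw [Y, Multiset.filter_filter]
    exact Multiset.filter_congr (fun x _ => by constructor <;> (intro h; first | exact ⟨h.1, by omega⟩ | omega))
  rw [hY, ← Multiset.countP_eq_card_filter, Multiset.countP_map]
  -- now : card (filter (fun j => t < g a b j) (range (m+3)))
  by_cases h2 : t = a - 1
  · -- erase case
    have key : (Multiset.range (m+2+1)).filter (fun j => t < g a b j) =
        ((Multiset.range (m+2+1)).filter (t < ·)).erase a := by
      rw [Multiset.Nodup.ext ((Multiset.nodup_range _).filter _)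
        (((Multiset.nodup_range _).filter _).erase _)]
      intro x
      rw [Multiset.Nodup.mem_erase_iff ((Multiset.nodup_range _).filter _),
        Multiset.mem_filter, Multiset.mem_filter, Multiset.mem_range]
      unfold g; split_ifs <;> omega
    rw [key, Multiset.card_erase_of_mem, cardFilterLt]
    · rw [Nat.pred_eq_sub_one]; unfold g; split_ifs <;> omega
    · rw [Multiset.mem_filter, Multiset.mem_range]; omega
  by_cases h3 : t = b
  · -- cons case
    have key : (Multiset.range (m+2+1)).filter (fun j => t < g a b j) =
        b ::ₘ ((Multiset.range (m+2+1)).filter (t < ·)) := by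
      rw [Multiset.Nodup.ext ((Multiset.nodup_range _).filter _)
        (Multiset.nodup_cons.mpr ⟨by rw [Multiset.mem_filter]; omega,
          (Multiset.nodup_range _).filter _⟩)]
      intro x
      rw [Multiset.mem_cons, Multiset.mem_filter, Multiset.mem_filter,
        Multiset.mem_range]
      unfold g; split_ifs <;> omega
    rw [key, Multiset.card_cons, cardFilterLt]
    unfold g; split_ifs <;> omega
  · -- plain case
    have key : (Multiset.range (m+2+1)).filter (fun j => t < g a b j) =
        ((Multiset.range (m+2+1)).filter (t < ·)) := by
      apply Multiset.filter_congr
      intro x hx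
      rw [Multiset.mem_range] at hx
      unfold g; split_ifs <;> omega
    rw [key, cardFilterLt]
    unfold g; split_ifs <;> omega

lemma conjY (m a b : ℕ) (ha1 : 1 ≤ a) (hak : a ≤ m+2) (hbk : b ≤ m+2) (hab : a ≠ b)
    (hab1 : a ≠ b+1) :
    conj (Y (m+2) a b) = Y (m+2) (m+3-a) (m+2-b) := by
  rw [conj, supY m a b ha1 hak hbk hab hab1]
  have hpt : ∀ t ∈ Multiset.range (g a b (m+2)),
      Multiset.card ((Y (m+2) a b).filter (t < ·)) = g (m+3-a) (m+2-b) (m+2-t) := by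
    intro t ht
    rw [Multiset.mem_range] at ht
    refine countY m a b t ha1 hak hbk hab hab1 ?_
    revert ht; unfold g; split_ifs <;> omega
  rw [Multiset.map_congr rfl hpt]
  have tailEq : (Multiset.range (m+1)).map (fun t => g (m+3-a) (m+2-b) (m+2-t)) =
      (Multiset.range (m+1)).map (fun j => g (m+3-a) (m+2-b) (j+2)) := by
    conv_rhs => rw [← revRange (m+1), Multiset.map_map]
    apply Multiset.map_congr rfl
    intro t ht
    rw [Multiset.mem_range] at ht
    simp only [Function.comp_apply]
    congr 1
    omega
  by_cases hb : b = m+2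
  · have hs : g a b (m+2) = m+3 := by unfold g; split_ifs <;> omega
    rw [hs]
    have hrhs : Y (m+2) (m+3-a) (m+2-b) =
        (Multiset.range (m+3)).map (g (m+3-a) (m+2-b)) := by
      rw [Y, Multiset.filter_eq_self]
      intro x hx
      obtain ⟨j, hj, rfl⟩ := Multiset.mem_map.mp hx
      rw [Multiset.mem_range] at hj
      unfold g; split_ifs <;> omega
    rw [hrhs]
    conv_rhs => rw [← revRange (m+3), Multiset.map_map]
    apply Multiset.map_congr rfl
    intro t ht
    rw [Multiset.mem_range] at ht
    simp only [Function.comp_apply]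
    congr 1 <;> omega
  by_cases ha : a = m+2
  · have hs : g a b (m+2) = m+1 := by unfold g; split_ifs <;> omega
    rw [hs]
    have h0 : ¬ (0 < g (m+3-a) (m+2-b) 0) := by unfold g; split_ifs <;> omega
    have h1 : ¬ (0 < g (m+3-a) (m+2-b) 1) := by unfold g; split_ifs <;> omega
    rw [Ydecomp, if_neg h0, if_neg h1, zero_add, zero_add, tailEq]
  · have hs : g a b (m+2) = m+2 := by unfold g; split_ifs <;> omega
    rw [hs]
    have h0 : ¬ (0 < g (m+3-a) (m+2-b) 0) := by unfold g; split_ifs <;> omega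
    have h1 : 0 < g (m+3-a) (m+2-b) 1 := by unfold g; split_ifs <;> omega
    rw [Ydecomp, if_neg h0, if_pos h1, zero_add, Multiset.singleton_add]
    conv_lhs => rw [show m+2 = (m+1)+1 from rfl, Multiset.range_succ]
    simp only [Multiset.map_cons]
    rw [show m+2-(m+1) = 1 by omega, tailEq]



def pA (m i : ℕ) : ℕ := (m+2) - i % (m+2)
def pB (m i : ℕ) : ℕ := (m+3 - i % (m+3)) % (m+3)

lemma modSucc (n i : ℕ) (hn : 1 ≤ n) :
    (i+1) % n = if i % n = n - 1 then 0 else i % n + 1 := by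
  have h1 : (i+1) % n = (i % n + 1) % n := by
    conv_lhs => rw [← Nat.mod_add_div i n]
    rw [show i % n + n * (i / n) + 1 = (i % n + 1) + n * (i / n) by ring,
      Nat.add_mul_mod_self_left]
  have h2 : i % n < n := Nat.mod_lt _ (by omega)
  rw [h1]
  split_ifs with h
  · rw [h, show n - 1 + 1 = n by omega, Nat.mod_self]
  · exact Nat.mod_eq_of_lt (by omega)

lemma pBval (m i : ℕ) : pB m i = if i % (m+3) = 0 then 0 else (m+3) - i % (m+3) := by
  have h2 : i % (m+3) < m+3 := Nat.mod_lt _ (by omega)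
  rw [pB]; split_ifs with h
  · rw [h, Nat.sub_zero, Nat.mod_self]
  · exact Nat.mod_eq_of_lt (by omega)

lemma pA1 (m i : ℕ) : 1 ≤ pA m i := by
  have := Nat.mod_lt i (show 0 < m+2 by omega); unfold pA; omega

lemma pA2 (m i : ℕ) : pA m i ≤ m+2 := by unfold pA; omega

lemma pBle (m i : ℕ) : pB m i ≤ m+2 := by
  have := Nat.mod_lt i (show 0 < m+3 by omega)
  rw [pBval]; split_ifs <;> omega

lemma dvdA (m i : ℕ) : (m+2) ∣ (i + pA m i) := by
  have h := Nat.mod_add_div i (m+2)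
  have hl := Nat.mod_lt i (show 0 < m+2 by omega)
  refine ⟨i / (m+2) + 1, ?_⟩
  have e : (m+2)*(i/(m+2)+1) = (m+2)*(i/(m+2)) + (m+2) := by ring
  unfold pA; omega

lemma dvdB (m i : ℕ) (h : 1 ≤ pB m i) : (m+3) ∣ (i + pB m i) := by
  have hm := Nat.mod_add_div i (m+3)
  have hl := Nat.mod_lt i (show 0 < m+3 by omega)
  rw [pBval] at h ⊢
  split_ifs at h ⊢ with h0
  · omega
  · refine ⟨i / (m+3) + 1, ?_⟩
    have e : (m+3)*(i/(m+3)+1) = (m+3)*(i/(m+3)) + (m+3) := by ring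
    omega

lemma coprime23 (m : ℕ) : Nat.Coprime (m+2) (m+3) := by
  have h : m+3 = (m+2) + 1 := rfl
  rw [h, Nat.coprime_self_add_right]
  exact Nat.coprime_one_right _

lemma neAB (m i : ℕ) (hi : i < (m+2)*(m+1)) : pA m i ≠ pB m i := by
  intro h
  have h1 := pA1 m i
  have h2 := pA2 m i
  have d1 := dvdA m i
  have d2 := dvdB m i (h ▸ h1)
  rw [← h] at d2
  have dd : ((m+2)*(m+3)) ∣ (i + pA m i) :=
    (coprime23 m).mul_dvd_of_dvd_of_dvd d1 d2
  have hle := Nat.le_of_dvd (by omega) dd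
  have e1 : (m+2)*(m+3) = (m+2)*(m+1) + (m+2)*2 := by ring
  have e2 : (m+2)*2 = m+2+m+2 := by ring
  omega

lemma neAB1 (m i : ℕ) (hi : i < (m+2)*(m+1)) : pA m i ≠ pB m i + 1 := by
  intro h
  have h1 := pA1 m i
  have h2 := pA2 m i
  have hBle := pBle m i
  have d1 := dvdA m i
  have d2 : (m+3) ∣ (i + pB m i) := by
    rcases Nat.eq_zero_or_pos (pB m i) with h0 | h0
    · rw [h0, Nat.add_zero]
      have hl : i % (m+3) < m+3 := Nat.mod_lt _ (by omega)
      have hz : i % (m+3) = 0 := by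
        rw [pBval] at h0; split_ifs at h0 with hc
        · exact hc
        · omega
      exact Nat.dvd_of_mod_eq_zero hz
    · exact dvdB m i h0
  obtain ⟨s, hs⟩ := d2
  obtain ⟨u, hu⟩ := d1
  have e1 : (m+2)*u = (m+3)*s + 1 := by omega
  have e2 : (m+3)*s = (m+2)*s + s := by ring
  have hsu : s < u := by
    rcases Nat.lt_or_ge s u with h' | h'
    · exact h'
    · exfalso
      have : (m+2)*u ≤ (m+2)*s := Nat.mul_le_mul_left _ h'
      omega
  obtain ⟨v, hv⟩ : ∃ v, u = s + v + 1 := ⟨u - s - 1, by omega⟩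
  have e3 : (m+2)*u = (m+2)*s + ((m+2)*v + (m+2)) := by rw [hv]; ring
  have hsge : m+1 ≤ s := by
    have hvpos : 0 ≤ (m+2)*v := Nat.zero_le _
    omega
  have e4 : (m+3)*(m+1) ≤ (m+3)*s := Nat.mul_le_mul_left _ hsge
  have e5 : (m+3)*(m+1) = (m+2)*(m+1) + (m+1) := by ring
  omega

lemma symA (m i j : ℕ) (hij : i + j + 1 = (m+2)*(m+1)) : pA m j = m+3 - pA m i := by
  have hd := Nat.mod_add_div i (m+2)
  have hr : i % (m+2) < m+2 := Nat.mod_lt _ (by omega)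
  have hq : i / (m+2) ≤ m := by
    by_contra hq
    have h' : (m+2)*(m+1) ≤ (m+2)*(i/(m+2)) := Nat.mul_le_mul_left _ (by omega)
    omega
  obtain ⟨u, hu⟩ : ∃ u, m = i/(m+2) + u := ⟨m - i/(m+2), by omega⟩
  have e1 : (m+2)*(i/(m+2)+u+1) = (m+2)*(i/(m+2)) + ((m+2)*u + (m+2)) := by ring
  have e1' : (m+2)*(m+1) = (m+2)*(i/(m+2)+u+1) := by
    rw [show i/(m+2)+u+1 = m+1 by omega]
  have hj : j = (m+1 - i % (m+2)) + (m+2)*u := by omega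
  have hjm : j % (m+2) = m+1 - i % (m+2) := by
    rw [hj, Nat.add_mul_mod_self_left]
    exact Nat.mod_eq_of_lt (by omega)
  unfold pA
  omega

lemma symB (m i j : ℕ) (hij : i + j + 1 = (m+2)*(m+1)) : pB m j = m+2 - pB m i := by
  have hd := Nat.mod_add_div i (m+3)
  have hr : i % (m+3) < m+3 := Nat.mod_lt _ (by omega)
  have key : (m+2)*(m+1) = (m+3)*m + 2 := by ring
  have hs : i / (m+3) ≤ m := by
    by_contra hq
    have h' : (m+3)*(m+1) ≤ (m+3)*(i/(m+3)) := Nat.mul_le_mul_left _ (by omega)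
    have h'' : (m+3)*(m+1) = (m+3)*m + (m+3) := by ring
    omega
  rw [pBval, pBval]
  by_cases h0 : i % (m+3) = 0
  · obtain ⟨w, hw⟩ : ∃ w, m = i/(m+3) + w := ⟨m - i/(m+3), by omega⟩
    have e1 : (m+3)*(i/(m+3)+w) = (m+3)*(i/(m+3)) + (m+3)*w := by ring
    have e1' : (m+3)*m = (m+3)*(i/(m+3)+w) := by rw [← hw]
    have hj : j = 1 + (m+3)*w := by omega
    have hjm : j % (m+3) = 1 := by
      rw [hj, Nat.add_mul_mod_self_left]
      exact Nat.mod_eq_of_lt (by omega)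
    split_ifs <;> omega
  by_cases h1 : i % (m+3) = 1
  · obtain ⟨w, hw⟩ : ∃ w, m = i/(m+3) + w := ⟨m - i/(m+3), by omega⟩
    have e1 : (m+3)*(i/(m+3)+w) = (m+3)*(i/(m+3)) + (m+3)*w := by ring
    have e1' : (m+3)*m = (m+3)*(i/(m+3)+w) := by rw [← hw]
    have hj : j = 0 + (m+3)*w := by omega
    have hjm : j % (m+3) = 0 := by rw [hj, Nat.add_mul_mod_self_left, Nat.zero_mod]
    split_ifs <;> omega
  · have hs2 : i / (m+3) + 1 ≤ m := by
      by_contra hq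
      have : i/(m+3) = m := by omega
      rw [this] at hd
      omega
    obtain ⟨w, hw⟩ : ∃ w, m = i/(m+3) + 1 + w := ⟨m - i/(m+3) - 1, by omega⟩
    have e1 : (m+3)*(i/(m+3)+1+w) = (m+3)*(i/(m+3)) + ((m+3)*w + (m+3)) := by ring
    have e1' : (m+3)*m = (m+3)*(i/(m+3)+1+w) := by rw [← hw]
    have hj : j = (m+4 - i%(m+3)) + (m+3)*w := by omega
    have hjm : j % (m+3) = m+4 - i%(m+3) := by
      rw [hj, Nat.add_mul_mod_self_left]
      exact Nat.mod_eq_of_lt (by omega)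
    split_ifs <;> omega

lemma tauY (m : ℕ) : tau (m+2) = Y (m+2) (m+2) 0 := by
  have hmain : (Multiset.range (m+2+1)).map (g (m+2) 0) =
      g (m+2) 0 (m+2) ::ₘ (g (m+2) 0 0 ::ₘ
        (Multiset.range (m+1)).map (fun j => g (m+2) 0 (j+1))) := by
    rw [Multiset.range_succ, Multiset.map_cons, mapRangeSucc]
  have h1 : g (m+2) 0 (m+2) = m+1 := by unfold g; split_ifs <;> first | omega | simp_all
  have h2 : g (m+2) 0 0 = 1 := by unfold g; split_ifs <;> first | omega | simp_all
  rw [Y, hmain, h1, h2, Multiset.filter_cons, if_pos (show (0:ℕ) < m+1 by omega),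
    Multiset.filter_cons, if_pos (show (0:ℕ) < 1 by omega),
    Multiset.singleton_add, Multiset.singleton_add]
  have h3 : (Multiset.range (m+1)).map (fun j => g (m+2) 0 (j+1)) =
      (Multiset.range (m+1)).map (· + 1) := by
    apply Multiset.map_congr rfl
    intro j hj
    rw [Multiset.mem_range] at hj
    unfold g; split_ifs <;> first | omega | simp_all
  rw [h3, Multiset.filter_eq_self.mpr ?_]
  · rw [tau, staircase, show m+2-1 = m+1 by omega]
  · intro x hx
    obtain ⟨j, _, rfl⟩ := Multiset.mem_map.mp hx
    omega

lemma orbit (m : ℕ) : ∀ i, i < (m+2)*(m+1) → bulg^[i] (tau (m+2)) = Y (m+2) (pA m i) (pB m i) := by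
  intro i
  induction i with
  | zero =>
    intro _
    have hA : pA m 0 = m+2 := by unfold pA; simp
    have hB : pB m 0 = 0 := by unfold pB; simp [Nat.mod_self]
    rw [Function.iterate_zero_apply, hA, hB, tauY]
  | succ i ih =>
    intro hlt
    have hi : i < (m+2)*(m+1) := by omega
    rw [Function.iterate_succ_apply', ih hi,
      stepY m (pA m i) (pB m i) (pA1 m i) (pA2 m i) (pBle m i) (neAB m i hi)]
    congr 1
    · have hms := modSucc (m+2) i (by omega)
      have hr : i % (m+2) < m+2 := Nat.mod_lt _ (by omega)
      unfold pA
      rw [hms]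
      split_ifs <;> omega
    · have hms := modSucc (m+3) i (by omega)
      have hr : i % (m+3) < m+3 := Nat.mod_lt _ (by omega)
      by_cases hcase : i % (m+3) = m+3-1
      · have h2 : (i+1) % (m+3) = 0 := by rw [hms, if_pos hcase]
        rw [pBval m i, pBval m (i+1), h2]
        split_ifs <;> first | omega | simp_all
      · have h2 : (i+1) % (m+3) = i % (m+3) + 1 := by rw [hms, if_neg hcase]
        rw [pBval m i, pBval m (i+1), h2]
        split_ifs <;> first | omega | simp_all

/-- Bentz: the partitions B^i(τ) and B^{k(k-1)-i-1}(τ) are conjugate for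
0 ≤ i ≤ k(k-1) - 1. -/
theorem bentz_conjugate (k : ℕ) (hk : 2 ≤ k) (i : ℕ) (hi : i < k * (k - 1)) :
    bulg^[k * (k - 1) - i - 1] (tau k) = conj (bulg^[i] (tau k)) := by
  obtain ⟨m, rfl⟩ : ∃ m, k = m + 2 := ⟨k - 2, by omega⟩
  have hkk : (m+2) * ((m+2) - 1) = (m+2)*(m+1) := by norm_num
  rw [hkk] at hi ⊢
  have hij : i + ((m+2)*(m+1) - i - 1) + 1 = (m+2)*(m+1) := by omega
  have hjlt : (m+2)*(m+1) - i - 1 < (m+2)*(m+1) := by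
    have : 0 < (m+2)*(m+1) := by positivity
    omega
  rw [orbit m i hi, orbit m ((m+2)*(m+1) - i - 1) hjlt,
    conjY m (pA m i) (pB m i) (pA1 m i) (pA2 m i) (pBle m i) (neAB m i hi) (neAB1 m i hi),
    symA m i _ hij, symB m i _ hij]
end

section
/- Every partition (λ₁, ..., λ_s) of n with s positive parts satisfying λ₁ ≥ s - 1 has a preimage under the Bulgarian solitaire operator B among partitions of n. -/
lemma sup_mem_of_ne_zero (l : Multiset ℕ) (h : l ≠ 0) : l.sup ∈ l := by
  induction l using Multiset.induction with
  | empty => simp at h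
  | cons a s ih =>
    rcases eq_or_ne s 0 with rfl | hs
    · simp
    · rw [Multiset.sup_cons]
      rcases le_total a s.sup with h1 | h1
      · rw [sup_eq_right.mpr h1]; exact Multiset.mem_cons_of_mem (ih hs)
      · rw [sup_eq_left.mpr h1]; exact Multiset.mem_cons_self a s

lemma sum_map_succ (s : Multiset ℕ) : (s.map (· + 1)).sum = s.sum + Multiset.card s := by
  induction s using Multiset.induction with
  | empty => simp
  | cons a t ih => simp [ih]; omega

/-- Every partition of n whose largest part is at least one less than its
number of parts has a preimage under the Bulgarian solitaire operator. -/
theorem has_preimage (n : ℕ) (l : Multiset ℕ) (hl : IsPartition n l)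
    (h : Multiset.card l - 1 ≤ l.sup) :
    ∃ m : Multiset ℕ, IsPartition n m ∧ bulg m = l := by
  obtain ⟨hsum, hpos⟩ := hl
  rcases eq_or_ne l 0 with rfl | hne
  · exact ⟨0, ⟨by simpa using hsum, by simp⟩, by simp [bulg, Multiset.filter_singleton]⟩
  · set c := l.sup with hc
    have hcmem : c ∈ l := sup_mem_of_ne_zero l hne
    have hcpos : 0 < c := hpos c hcmem
    have hcard : 0 < Multiset.card l := Multiset.card_pos.mpr hne
    set k := c - (Multiset.card l - 1) with hk
    set m := (l.erase c).map (· + 1) + Multiset.replicate k 1 with hm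
    have hcons : c ::ₘ l.erase c = l := Multiset.cons_erase hcmem
    have hce : Multiset.card (l.erase c) = Multiset.card l - 1 :=
      Multiset.card_erase_of_mem hcmem
    have hse : (l.erase c).sum + c = n := by
      have h2 : (c ::ₘ l.erase c).sum = l.sum := by rw [hcons]
      rw [Multiset.sum_cons] at h2; omega
    have hcardm : Multiset.card m = c := by
      simp [hm, hce, Multiset.card_replicate]
      omega
    refine ⟨m, ⟨?_, ?_⟩, ?_⟩
    · simp [hm, sum_map_succ, Multiset.sum_replicate, hce]
      omega
    · intro x hx
      rw [hm, Multiset.mem_add] at hx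
      rcases hx with hx | hx
      · obtain ⟨a, _, rfl⟩ := Multiset.mem_map.mp hx
        omega
      · rw [Multiset.eq_of_mem_replicate hx]; norm_num
    · rw [bulg, hcardm, hm, Multiset.map_add, Multiset.map_map, Multiset.map_replicate]
      have h1 : ((· - 1) ∘ (· + 1) : ℕ → ℕ) = id := by funext x; simp
      rw [h1, Multiset.map_id]
      rw [Multiset.filter_cons_of_pos _ hcpos]
      rw [Multiset.filter_add]
      rw [Multiset.filter_eq_self.mpr fun a ha => hpos a (Multiset.mem_of_mem_erase ha)]
      have h2 : Multiset.filter (0 < ·) (Multiset.replicate k 0) = 0 :=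
        Multiset.filter_eq_nil.mpr fun a ha => by
          rw [Multiset.eq_of_mem_replicate ha]; simp
      rw [h2, add_zero, hcons]
end
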